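/- Let μ be a boundedly finite Borel measure on E = [0,∞)² ∖ {(0,0)} that is homogeneous of degree −1 and has standardized marginals, and suppose μ([1,∞)×[1,∞)) = 0 (tail independence). Then μ is concentrated on the coordinate axes, i.e. μ((0,∞)×(0,∞)) = 0, and for every norm ‖·‖ on ℝ² with ‖(1,0)‖ = 1 = ‖(0,1)‖ the spectral measure Φ of μ with respect to ‖·‖ satisfies Φ({0}) = 1, Φ({π/2}) = 1, and Φ((0,π/2)) = 0. -/

import Mathlib

open MeasureTheory Set Real Filter Topology
open scoped ENNReal Pointwise

noncomputable section

/-- The cone `E = [0,∞)² \ {(0,0)}` as a subset of `ℝ²`. -/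
def Econe : Set (ℝ × ℝ) := (Ici 0 ×ˢ Ici 0) \ {((0 : ℝ), (0 : ℝ))}

/-- The angular coordinate `θ(z) = arctan (z₁ / z₂)`, with `θ(z) = π/2` when `z₂ = 0`. -/
def ang (z : ℝ × ℝ) : ℝ := if z.2 = 0 then π / 2 else Real.arctan (z.1 / z.2)

lemma smul_quad (c : ℝ) (hc : 0 < c) :
    c • ((Ici (1:ℝ)) ×ˢ (Ici (1:ℝ))) = Ici c ×ˢ Ici c := by
  ext z
  simp only [Set.mem_smul_set, Set.mem_prod, Set.mem_Ici]
  constructor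
  · rintro ⟨w, ⟨h1, h2⟩, rfl⟩
    constructor
    · simpa using mul_le_mul_of_nonneg_left h1 hc.le
    · simpa using mul_le_mul_of_nonneg_left h2 hc.le
  · rintro ⟨h1, h2⟩
    refine ⟨(z.1 / c, z.2 / c), ⟨?_, ?_⟩, ?_⟩
    · exact (one_le_div hc).2 h1
    · exact (one_le_div hc).2 h2
    · ext <;> simp [mul_div_cancel₀, hc.ne']

theorem stmt5 (μ : Measure (ℝ × ℝ)) (hμE : μ Econeᶜ = 0)
    (hbf : ∀ ε > (0 : ℝ), μ {z | z ∈ Econe ∧ ε ≤ max z.1 z.2} < ⊤)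
    (hhom : ∀ B : Set (ℝ × ℝ), B ⊆ Econe → MeasurableSet B → ∀ c > (0 : ℝ),
      μ (c • B) = ENNReal.ofReal c⁻¹ * μ B)
    (hstd : ∀ z > (0 : ℝ),
      μ {w | w ∈ Econe ∧ z ≤ w.1} = ENNReal.ofReal (1 / z) ∧
      μ {w | w ∈ Econe ∧ z ≤ w.2} = ENNReal.ofReal (1 / z))
    (hti : μ (Ici 1 ×ˢ Ici 1) = 0) :
    μ (Ioi 0 ×ˢ Ioi 0) = 0 ∧
    ∀ Nn : ℝ × ℝ → ℝ,
      (∀ z w, Nn (z + w) ≤ Nn z + Nn w) →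
      (∀ (c : ℝ) (z), Nn (c • z) = |c| * Nn z) →
      (∀ z, Nn z = 0 ↔ z = 0) →
      Nn (1, 0) = 1 → Nn (0, 1) = 1 →
      ∀ Φ : Measure ℝ,
        (∀ B : Set ℝ, MeasurableSet B →
          Φ B = μ {z | z ∈ Econe ∧ 1 ≤ Nn z ∧ ang z ∈ B}) →
        Φ {0} = 1 ∧ Φ {π / 2} = 1 ∧ Φ (Ioo 0 (π / 2)) = 0 := by
  -- the unit quadrant is inside the cone
  have hsub : (Ici (1:ℝ)) ×ˢ (Ici (1:ℝ)) ⊆ Econe := by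
    rintro ⟨a, b⟩ ⟨ha, hb⟩
    refine ⟨⟨Set.mem_Ici.2 (le_trans zero_le_one ha), Set.mem_Ici.2 (le_trans zero_le_one hb)⟩, ?_⟩
    simp only [Set.mem_singleton_iff, Prod.mk.injEq, not_and]
    intro h; exact absurd (h ▸ ha) (by norm_num)
  -- each scaled quadrant is null
  have hQ : ∀ c : ℝ, 0 < c → μ ((Ici c) ×ˢ (Ici c)) = 0 := by
    intro c hc
    have := hhom ((Ici (1:ℝ)) ×ˢ (Ici (1:ℝ))) hsub
      (measurableSet_Ici.prod measurableSet_Ici) c hc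
    rw [smul_quad c hc] at this
    rw [this, hti, mul_zero]
  -- the open quadrant is null
  have hpos : μ (Ioi 0 ×ˢ Ioi 0) = 0 := by
    have hcover : (Ioi (0:ℝ)) ×ˢ (Ioi (0:ℝ)) ⊆
        ⋃ n : ℕ, (Ici ((n:ℝ)+1)⁻¹) ×ˢ (Ici ((n:ℝ)+1)⁻¹) := by
      rintro ⟨a, b⟩ ⟨ha, hb⟩
      have hm : 0 < min a b := lt_min ha hb
      obtain ⟨n, hn⟩ := exists_nat_one_div_lt hm
      rw [Set.mem_iUnion]
      refine ⟨n, ?_, ?_⟩ <;> rw [Set.mem_Ici]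
      · calc ((n:ℝ)+1)⁻¹ = 1 / ((n:ℝ)+1) := (one_div _).symm
          _ ≤ min a b := hn.le
          _ ≤ a := min_le_left _ _
      · calc ((n:ℝ)+1)⁻¹ = 1 / ((n:ℝ)+1) := (one_div _).symm
          _ ≤ min a b := hn.le
          _ ≤ b := min_le_right _ _
    refine le_antisymm ?_ zero_le
    calc μ ((Ioi (0:ℝ)) ×ˢ (Ioi (0:ℝ))) ≤
        μ (⋃ n : ℕ, (Ici ((n:ℝ)+1)⁻¹) ×ˢ (Ici ((n:ℝ)+1)⁻¹)) := measure_mono hcover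
      _ = 0 := measure_iUnion_null fun n => hQ _ (by positivity)
  refine ⟨hpos, ?_⟩
  intro Nn _ hNsmul _ hN10 hN01 Φ hΦ
  -- computation of norms on axes
  have hNax1 : ∀ a : ℝ, 0 ≤ a → Nn (a, 0) = a := by
    intro a ha
    have : ((a:ℝ), (0:ℝ)) = a • ((1:ℝ), (0:ℝ)) := by ext <;> simp
    rw [this, hNsmul, hN10, mul_one, abs_of_nonneg ha]
  have hNax2 : ∀ b : ℝ, 0 ≤ b → Nn (0, b) = b := by
    intro b hb
    have : ((0:ℝ), (b:ℝ)) = b • ((0:ℝ), (1:ℝ)) := by ext <;> simp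
    rw [this, hNsmul, hN01, mul_one, abs_of_nonneg hb]
  have hpi : (0:ℝ) < π / 2 := by positivity
  -- vertical axis part
  have hA0 : {z : ℝ × ℝ | z ∈ Econe ∧ 1 ≤ Nn z ∧ ang z ∈ ({0} : Set ℝ)} =
      {z : ℝ × ℝ | z.1 = 0 ∧ 1 ≤ z.2} := by
    ext ⟨a, b⟩
    simp only [Set.mem_setOf_eq, Set.mem_singleton_iff]
    constructor
    · rintro ⟨⟨⟨ha, hb⟩, hne⟩, hN, hang⟩
      have hb0 : b ≠ 0 := by
        intro h
        rw [ang, if_pos h] at hang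
        exact absurd hang hpi.ne'
      rw [ang, if_neg hb0] at hang
      have : a / b = 0 := Real.arctan_injective (by rw [hang, Real.arctan_zero])
      have ha0 : a = 0 := by
        field_simp at this; simpa using this
      refine ⟨ha0, ?_⟩
      rw [ha0] at hN
      rwa [hNax2 b hb] at hN
    · rintro ⟨ha0, hb1⟩
      have hb0 : (0:ℝ) < b := lt_of_lt_of_le one_pos hb1
      subst ha0
      refine ⟨⟨⟨Set.self_mem_Ici, Set.mem_Ici.2 hb0.le⟩, ?_⟩, ?_, ?_⟩
      · simp only [Set.mem_singleton_iff, Prod.mk.injEq]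
        rintro ⟨-, h⟩; exact absurd h hb0.ne'
      · rw [hNax2 b hb0.le]; exact hb1
      · rw [ang]; simp [hb0.ne']
  -- horizontal axis part
  have hA1 : {z : ℝ × ℝ | z ∈ Econe ∧ 1 ≤ Nn z ∧ ang z ∈ ({π/2} : Set ℝ)} =
      {z : ℝ × ℝ | 1 ≤ z.1 ∧ z.2 = 0} := by
    ext ⟨a, b⟩
    simp only [Set.mem_setOf_eq, Set.mem_singleton_iff]
    constructor
    · rintro ⟨⟨⟨ha, hb⟩, hne⟩, hN, hang⟩
      have hb0 : b = 0 := by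
        by_contra h
        rw [ang, if_neg h] at hang
        exact absurd hang (Real.arctan_lt_pi_div_two _).ne
      subst hb0
      rw [hNax1 a ha] at hN
      exact ⟨hN, rfl⟩
    · rintro ⟨ha1, hb0⟩
      subst hb0
      have ha0 : (0:ℝ) < a := lt_of_lt_of_le one_pos ha1
      refine ⟨⟨⟨Set.mem_Ici.2 ha0.le, Set.self_mem_Ici⟩, ?_⟩, ?_, ?_⟩
      · simp only [Set.mem_singleton_iff, Prod.mk.injEq]
        rintro ⟨h, -⟩; exact absurd h ha0.ne'
      · rw [hNax1 a ha0.le]; exact ha1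
      · rw [ang]; simp
  -- middle part is inside open quadrant
  have hmid : {z : ℝ × ℝ | z ∈ Econe ∧ 1 ≤ Nn z ∧ ang z ∈ Ioo 0 (π/2)} ⊆
      (Ioi (0:ℝ)) ×ˢ (Ioi (0:ℝ)) := by
    rintro ⟨a, b⟩ ⟨⟨⟨ha, hb⟩, hne⟩, hN, hang⟩
    simp only [Set.mem_Ioo] at hang
    have hb0 : b ≠ 0 := by
      intro h
      rw [ang, if_pos h] at hang
      exact absurd hang.2 (lt_irrefl _)
    rw [ang, if_neg hb0] at hang
    have hbpos : 0 < b := lt_of_le_of_ne hb (Ne.symm hb0)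
    have hdiv : 0 < a / b := by
      by_contra h
      push_neg at h
      have : Real.arctan (a/b) ≤ Real.arctan 0 :=
        Real.arctan_strictMono.monotone h
      rw [Real.arctan_zero] at this
      linarith [hang.1]
    have : 0 < a := by
      have := mul_pos hdiv hbpos
      rwa [div_mul_cancel₀ _ hb0] at this
    exact ⟨this, hbpos⟩
  -- measures of the axis pieces
  have key : ∀ (S A : Set (ℝ × ℝ)), A ⊆ S → S \ A ⊆ (Ioi (0:ℝ)) ×ˢ (Ioi (0:ℝ)) →
      μ S = ENNReal.ofReal 1 → μ A = 1 := by
    intro S A hAS hdiff hS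
    have h1 : μ S ≤ μ A := by
      calc μ S ≤ μ (S ∩ A) + μ (S \ A) := by
            exact measure_le_inter_add_diff μ S A
        _ ≤ μ A + μ (S \ A) :=
            add_le_add (measure_mono Set.inter_subset_right) le_rfl
        _ ≤ μ A + μ ((Ioi (0:ℝ)) ×ˢ (Ioi (0:ℝ))) :=
            add_le_add le_rfl (measure_mono hdiff)
        _ = μ A := by rw [hpos, add_zero]
    have h2 : μ A ≤ μ S := measure_mono hAS
    have := le_antisymm h2 h1
    rw [this, hS]; norm_num
  -- marginal at 1 for second coordinate
  obtain ⟨hm1, hm2⟩ := hstd 1 one_pos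
  constructor
  · rw [hΦ {0} (measurableSet_singleton 0), hA0]
    refine key {w | w ∈ Econe ∧ 1 ≤ w.2} _ ?_ ?_ (by simpa using hm2)
    · rintro ⟨a, b⟩ ⟨ha0, hb1⟩
      have hb0 : (0:ℝ) < b := lt_of_lt_of_le one_pos hb1
      subst ha0
      refine ⟨⟨⟨Set.self_mem_Ici, Set.mem_Ici.2 hb0.le⟩, ?_⟩, hb1⟩
      simp only [Set.mem_singleton_iff, Prod.mk.injEq]
      rintro ⟨-, h⟩; exact absurd h hb0.ne'
    · rintro ⟨a, b⟩ ⟨⟨⟨⟨ha, hb⟩, hne⟩, hb1⟩, hnA⟩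
      simp only [Set.mem_setOf_eq] at hnA
      have ha0 : a ≠ 0 := fun h => hnA ⟨h, hb1⟩
      exact ⟨lt_of_le_of_ne ha (Ne.symm ha0), lt_of_lt_of_le one_pos hb1⟩
  constructor
  · rw [hΦ {π/2} (measurableSet_singleton _), hA1]
    refine key {w | w ∈ Econe ∧ 1 ≤ w.1} _ ?_ ?_ (by simpa using hm1)
    · rintro ⟨a, b⟩ ⟨ha1, hb0⟩
      subst hb0
      have ha0 : (0:ℝ) < a := lt_of_lt_of_le one_pos ha1
      refine ⟨⟨⟨Set.mem_Ici.2 ha0.le, Set.self_mem_Ici⟩, ?_⟩, ha1⟩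
      simp only [Set.mem_singleton_iff, Prod.mk.injEq]
      rintro ⟨h, -⟩; exact absurd h ha0.ne'
    · rintro ⟨a, b⟩ ⟨⟨⟨⟨ha, hb⟩, hne⟩, ha1⟩, hnA⟩
      simp only [Set.mem_setOf_eq] at hnA
      have hb0 : b ≠ 0 := fun h => hnA ⟨ha1, h⟩
      exact ⟨lt_of_lt_of_le one_pos ha1, lt_of_le_of_ne hb (Ne.symm hb0)⟩
  · rw [hΦ (Ioo 0 (π/2)) measurableSet_Ioo]
    refine le_antisymm ?_ zero_le
    calc μ _ ≤ μ ((Ioi (0:ℝ)) ×ˢ (Ioi (0:ℝ))) := measure_mono hmid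
      _ = 0 := hpos
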